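/- Let 0 ≤ ν < 1, κ ≥ 0 and R̃ ≥ 0 with κ < 1 − ν. Let (r_k^{(l)})_{k≥1, l≥0} be nonnegative reals with r_k^{(0)} ≤ R̃ for all k ≥ 1, satisfying for all k ≥ 1 and l ≥ 1: r_k^{(l)} ≤ κ Σ_{r=0}^{k−1} ν^r r_{k−r}^{(l−1)} + 2√2 ν^k R̃. Then for every k ≥ 1 with κ k < 1: inf_{l≥1} r_k^{(l)} ≤ 2√2 ν^k R̃ / (1 − κ k). -/

import Mathlib

open Finset Filter Topology

private lemma geomBound (x : ℝ) (h0 : 0 ≤ x) (h1 : x < 1) :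
    ∀ n : ℕ, ∑ i ∈ Finset.range n, x ^ i ≤ 1 / (1 - x) := by
  have hx : (0:ℝ) < 1 - x := by linarith
  intro n
  induction n with
  | zero => simp; exact h1.le
  | succ n ih =>
    rw [geom_sum_succ]
    have h2 : x * ∑ i ∈ Finset.range n, x ^ i ≤ x * (1 / (1 - x)) :=
      mul_le_mul_of_nonneg_left ih h0
    have h3 : x * (1 / (1 - x)) + 1 = 1 / (1 - x) := by field_simp; ring
    linarith

theorem stmt7 (ν κ R : ℝ) (hν0 : 0 ≤ ν) (hν1 : ν < 1) (hκ0 : 0 ≤ κ) (hκ : κ < 1 - ν)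
    (hR : 0 ≤ R)
    (rr : ℕ → ℕ → ℝ) (hrr : ∀ k l, 0 ≤ rr k l)
    (h0 : ∀ k, 1 ≤ k → rr k 0 ≤ R)
    (hrec : ∀ k, 1 ≤ k → ∀ l, 1 ≤ l →
      rr k l ≤ κ * (∑ j ∈ Finset.range k, ν ^ j * rr (k - j) (l - 1)) +
        2 * Real.sqrt 2 * ν ^ k * R) :
    ∀ k : ℕ, 1 ≤ k → κ * (k : ℝ) < 1 →
      (⨅ l : ℕ, rr k (l + 1)) ≤ 2 * Real.sqrt 2 * ν ^ k * R / (1 - κ * (k : ℝ)) := by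
  intro k hk hκk
  have hν' : (0:ℝ) < 1 - ν := by linarith
  set μ : ℝ := κ / (1 - ν) with hμdef
  have hμ0 : 0 ≤ μ := div_nonneg hκ0 hν'.le
  have hμ1 : μ < 1 := (div_lt_one hν').mpr (by linarith)
  have hκk0 : 0 ≤ κ * (k:ℝ) := mul_nonneg hκ0 (Nat.cast_nonneg k)
  have hC : 0 ≤ 2 * Real.sqrt 2 * R := by positivity
  set C : ℝ := 2 * Real.sqrt 2 * R with hCdef
  -- key inductive bound
  have key : ∀ l : ℕ, ∀ k' : ℕ, 1 ≤ k' → k' ≤ k →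
      rr k' l ≤ ν ^ k' * C * (∑ i ∈ Finset.range l, (κ * (k:ℝ)) ^ i) + μ ^ l * R := by
    intro l
    induction l with
    | zero =>
      intro k' h1 _
      simpa using h0 k' h1
    | succ l ih =>
      intro k' h1 h2
      have hrec' := hrec k' h1 (l + 1) (Nat.le_add_left 1 l)
      simp only [Nat.add_sub_cancel] at hrec'
      set S : ℝ := ∑ i ∈ Finset.range l, (κ * (k:ℝ)) ^ i with hSdef
      have hS0 : 0 ≤ S := Finset.sum_nonneg fun i _ => pow_nonneg hκk0 i
      have hνk0 : (0:ℝ) ≤ ν ^ k' := pow_nonneg hν0 k'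
      have hsum : ∑ j ∈ Finset.range k', ν ^ j * rr (k' - j) l ≤
          (k':ℝ) * (ν ^ k' * C * S) + (∑ j ∈ Finset.range k', ν ^ j) * (μ ^ l * R) := by
        calc ∑ j ∈ Finset.range k', ν ^ j * rr (k' - j) l
            ≤ ∑ j ∈ Finset.range k', (ν ^ k' * C * S + ν ^ j * (μ ^ l * R)) := by
              apply Finset.sum_le_sum
              intro j hj
              have hj' : j < k' := Finset.mem_range.mp hj
              have h1' : 1 ≤ k' - j := by omega
              have h2' : k' - j ≤ k := by omega
              have := ih (k' - j) h1' h2'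
              have hmul : ν ^ j * rr (k' - j) l ≤
                  ν ^ j * (ν ^ (k' - j) * C * (S) + μ ^ l * R) :=
                mul_le_mul_of_nonneg_left this (pow_nonneg hν0 j)
              have hpow : ν ^ j * ν ^ (k' - j) = ν ^ k' := by
                rw [← pow_add]; congr 1; omega
              calc ν ^ j * rr (k' - j) l ≤ ν ^ j * (ν ^ (k' - j) * C * S + μ ^ l * R) := hmul
                _ = ν ^ j * ν ^ (k' - j) * C * S + ν ^ j * (μ ^ l * R) := by ring
                _ = ν ^ k' * C * S + ν ^ j * (μ ^ l * R) := by rw [hpow]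
          _ = (k':ℝ) * (ν ^ k' * C * S) + (∑ j ∈ Finset.range k', ν ^ j) * (μ ^ l * R) := by
              rw [Finset.sum_add_distrib, Finset.sum_const, Finset.card_range, ← Finset.sum_mul]
              ring
      have hSν : (∑ j ∈ Finset.range k', ν ^ j) ≤ 1 / (1 - ν) := geomBound ν hν0 hν1 k'
      have hκk' : κ * (k':ℝ) ≤ κ * (k:ℝ) :=
        mul_le_mul_of_nonneg_left (Nat.cast_le.mpr h2) hκ0
      have hB0 : 0 ≤ μ ^ l * R := mul_nonneg (pow_nonneg hμ0 l) hR
      have step1 : κ * (∑ j ∈ Finset.range k', ν ^ j * rr (k' - j) l) ≤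
          κ * ((k':ℝ) * (ν ^ k' * C * S) + (∑ j ∈ Finset.range k', ν ^ j) * (μ ^ l * R)) :=
        mul_le_mul_of_nonneg_left hsum hκ0
      have step2 : κ * ((k':ℝ) * (ν ^ k' * C * S)) ≤ (κ * (k:ℝ)) * (ν ^ k' * C * S) := by
        have : (κ * (k':ℝ)) * (ν ^ k' * C * S) ≤ (κ * (k:ℝ)) * (ν ^ k' * C * S) :=
          mul_le_mul_of_nonneg_right hκk' (by positivity)
        linarith [this]
      have step3 : κ * ((∑ j ∈ Finset.range k', ν ^ j) * (μ ^ l * R)) ≤ μ ^ (l + 1) * R := by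
        have h4 : κ * (∑ j ∈ Finset.range k', ν ^ j) ≤ κ * (1 / (1 - ν)) :=
          mul_le_mul_of_nonneg_left hSν hκ0
        have h5 : κ * (1 / (1 - ν)) = μ := by rw [hμdef]; field_simp
        have h6 : (κ * (∑ j ∈ Finset.range k', ν ^ j)) * (μ ^ l * R) ≤ μ * (μ ^ l * R) := by
          apply mul_le_mul_of_nonneg_right _ hB0
          rw [← h5] at *; exact h4
        calc κ * ((∑ j ∈ Finset.range k', ν ^ j) * (μ ^ l * R))
            = (κ * (∑ j ∈ Finset.range k', ν ^ j)) * (μ ^ l * R) := by ring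
          _ ≤ μ * (μ ^ l * R) := h6
          _ = μ ^ (l + 1) * R := by ring
      have hgs : ∑ i ∈ Finset.range (l + 1), (κ * (k:ℝ)) ^ i = κ * (k:ℝ) * S + 1 := by
        rw [hSdef, geom_sum_succ]
      have heq : (κ * (k:ℝ)) * (ν ^ k' * C * S) + 2 * Real.sqrt 2 * ν ^ k' * R =
          ν ^ k' * C * (κ * (k:ℝ) * S + 1) := by rw [hCdef]; ring
      rw [hgs]
      have := hrec'
      linarith [step1, step2, step3, heq.le, heq.ge]
  -- conclude
  have bdd : BddBelow (Set.range fun l => rr k (l + 1)) := by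
    refine ⟨0, ?_⟩
    rintro x ⟨l, rfl⟩
    exact hrr k (l + 1)
  set T : ℝ := 2 * Real.sqrt 2 * ν ^ k * R / (1 - κ * (k:ℝ)) with hTdef
  have hbound : ∀ l : ℕ, (⨅ l : ℕ, rr k (l + 1)) ≤ T + μ ^ (l + 1) * R := by
    intro l
    have h1 := ciInf_le bdd l
    have h2 := key (l + 1) k hk le_rfl
    have h3 : ν ^ k * C * (∑ i ∈ Finset.range (l + 1), (κ * (k:ℝ)) ^ i) ≤
        ν ^ k * C * (1 / (1 - κ * (k:ℝ))) := by
      apply mul_le_mul_of_nonneg_left (geomBound _ hκk0 hκk _) (by positivity)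
    have h4 : ν ^ k * C * (1 / (1 - κ * (k:ℝ))) = T := by rw [hTdef, hCdef]; ring
    linarith
  have htend : Tendsto (fun l : ℕ => T + μ ^ (l + 1) * R) atTop (𝓝 (T + 0 * R)) := by
    apply Tendsto.const_add
    apply Tendsto.mul_const
    exact (tendsto_pow_atTop_nhds_zero_of_lt_one hμ0 hμ1).comp (tendsto_add_atTop_nat 1)
  have := ge_of_tendsto' htend hbound
  simpa using this
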